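/- arXiv:2006.07893 — 6 statements merged into one kernel-verified Lean document; each statement's English description precedes it below -/
import Mathlib

section
/- Let B₀ = ℚ[c₁,...,cₙ] and let c(z) = 1 - c₁z + c₂z² - ... + (-1)ⁿcₙzⁿ. Let Bᵣ = B₀[e₁,...,eᵣ] with Eᵣ(z) = 1 - e₁z + ... + (-1)ʳeᵣzʳ, and define hⱼ(c) by ∑ⱼ hⱼ(c)zʲ = c(z)/Eᵣ(z). Then in the quotient ring B_{r,n} = Bᵣ/(h_{n-r+1}(c),...,hₙ(c)), the polynomial Xⁿ(c) = Xⁿ - c₁X^{n-1} + ... + (-1)ⁿcₙ factors as the product of the two monic polynomials pᵣ(X) = Xʳ - e₁X^{r-1} + ... + (-1)ʳeᵣ and q(X) = X^{n-r} + h₁(c)X^{n-r-1} + ... + h_{n-r}(c). -/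
open PowerSeries Polynomial

set_option synthInstance.maxHeartbeats 1000000
set_option maxHeartbeats 1000000

noncomputable section

abbrev B0 (n : ℕ) : Type := MvPolynomial (Fin n) ℚ
abbrev Br (n r : ℕ) : Type := MvPolynomial (Fin r) (B0 n)

def cc (n : ℕ) : ℕ → B0 n
  | 0 => 1
  | i + 1 => if h : i < n then MvPolynomial.X ⟨i, h⟩ else 0

def ee (n r : ℕ) : ℕ → Br n r
  | 0 => 1
  | i + 1 => if h : i < r then MvPolynomial.X ⟨i, h⟩ else 0

/-- c(z) = ∑ (-1)^i cᵢ zⁱ, viewed over Bᵣ -/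
def cser (n r : ℕ) : PowerSeries (Br n r) :=
  PowerSeries.mk fun i => (-1) ^ i * MvPolynomial.C (cc n i)

/-- Eᵣ(z) = ∑ (-1)^i eᵢ zⁱ -/
def Eser (n r : ℕ) : PowerSeries (Br n r) :=
  PowerSeries.mk fun i => (-1) ^ i * ee n r i

/-- H(z) = 1/Eᵣ(z) -/
def Hser (n r : ℕ) : PowerSeries (Br n r) := (Eser n r).invOfUnit 1

/-- hⱼ : coefficient of zʲ in 1/Eᵣ(z) -/
def hpl (n r : ℕ) (j : ℕ) : Br n r := PowerSeries.coeff j (Hser n r)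

/-- hⱼ(c) : coefficient of zʲ in c(z)/Eᵣ(z) -/
def hcc (n r : ℕ) (j : ℕ) : Br n r := PowerSeries.coeff j (cser n r * Hser n r)

def hplZ (n r : ℕ) (j : ℤ) : Br n r := if 0 ≤ j then hpl n r j.toNat else 0
def hccZ (n r : ℕ) (j : ℤ) : Br n r := if 0 ≤ j then hcc n r j.toNat else 0

/-- the ideal I_{r,n}(c) = (h_{n-r+1}(c),…,hₙ(c)) -/
def Irn (n r : ℕ) : Ideal (Br n r) := Ideal.span (hcc n r '' Set.Icc (n - r + 1) n)

/-- Xʲ(c) = ∑ᵢ (-1)ⁱ cᵢ X^{j-i} -/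
def Xc (n : ℕ) (j : ℕ) : Polynomial (B0 n) :=
  ∑ i ∈ Finset.range (j + 1),
    (-1 : Polynomial (B0 n)) ^ i * Polynomial.C (cc n i) * Polynomial.X ^ (j - i)

/-- the Schur determinant Δ_λ(Hᵣ(c)) -/
def Dl (n r : ℕ) (lam : Fin r → ℕ) : Br n r :=
  Matrix.det (Matrix.of fun i j : Fin r => hccZ n r ((lam j : ℤ) + (i : ℤ) - (j : ℤ)))

abbrev ExtA (n : ℕ) : Type := ExteriorAlgebra (B0 n) (Polynomial (B0 n))

def wedge (n r : ℕ) (g : Fin r → Polynomial (B0 n)) : ExtA n :=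
  ExteriorAlgebra.ιMulti (B0 n) r g

/-- the Laksov–Thorup module structure: eᵢ acts as the component σ̄ᵢ of the
inverse Schubert derivation, i.e. `σ̄(z)(v₁∧⋯∧vᵣ) = ∏ (vⱼ - X·vⱼ z)`. -/
def ActSpec (n r : ℕ)
    (act : Br n r →ₐ[B0 n] Module.End (B0 n) (ExtA n)) : Prop :=
  ∀ (i : Fin r) (g : Fin r → Polynomial (B0 n)),
    act (MvPolynomial.X i) (wedge n r g) =
      ∑ S ∈ Finset.powersetCard ((i : ℕ) + 1) (Finset.univ : Finset (Fin r)),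
        wedge n r fun j => if j ∈ S then Polynomial.X * g j else g j

end

section Aux

lemma ee_eq_zero (n r : ℕ) {a : ℕ} (ha : r < a) : ee n r a = 0 := by
  cases a with
  | zero => omega
  | succ i => rw [ee, dif_neg (by omega)]

lemma hcc_mem (n r : ℕ) {b : ℕ} (hb1 : n - r < b) (hb2 : b ≤ n) : hcc n r b ∈ Irn n r :=
  Ideal.subset_span ⟨b, ⟨by omega, hb2⟩, rfl⟩

lemma Eser_mul_Hser (n r : ℕ) : Eser n r * Hser n r = 1 := by
  apply PowerSeries.mul_invOfUnit
  simp [Eser, ee]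

lemma conv (n r : ℕ) (k : ℕ) :
    ((-1) ^ k * MvPolynomial.C (cc n k) : Br n r) =
      ∑ p ∈ Finset.HasAntidiagonal.antidiagonal k, ((-1) ^ p.1 * ee n r p.1) * hcc n r p.2 := by
  have h : cser n r = Eser n r * (cser n r * Hser n r) := by
    rw [show Eser n r * (cser n r * Hser n r) = Eser n r * Hser n r * cser n r by ring,
      Eser_mul_Hser, one_mul]
  have h2 := congrArg (PowerSeries.coeff k) h
  rw [PowerSeries.coeff_mul] at h2
  simpa [cser, Eser, hcc] using h2

lemma coeff_sum_CX {R : Type*} [CommRing R] (N : ℕ) (f : ℕ → R) (k : ℕ) :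
    (∑ i ∈ Finset.range (N + 1), Polynomial.C (f i) * Polynomial.X ^ i).coeff k =
      if k ≤ N then f k else 0 := by
  rw [Polynomial.finset_sum_coeff]
  simp only [Polynomial.coeff_C_mul, Polynomial.coeff_X_pow, mul_ite, mul_one, mul_zero]
  simp [Nat.lt_succ_iff]

lemma reflect_sum_CX {R : Type*} [CommRing R] (N : ℕ) (f : ℕ → R) :
    Polynomial.reflect N (∑ i ∈ Finset.range (N + 1), Polynomial.C (f i) * Polynomial.X ^ i) =
      ∑ i ∈ Finset.range (N + 1), Polynomial.C (f i) * Polynomial.X ^ (N - i) := by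
  have : ∀ (s : Finset ℕ) (p : ℕ → Polynomial R),
      Polynomial.reflect N (∑ i ∈ s, p i) = ∑ i ∈ s, Polynomial.reflect N (p i) := by
    intro s p
    induction s using Finset.induction with
    | empty => simp
    | insert a s h ih => simp [Finset.sum_insert h, Polynomial.reflect_add, ih]
  rw [this]
  apply Finset.sum_congr rfl
  intro i hi
  rw [Polynomial.reflect_C_mul_X_pow, Polynomial.revAt_le (by
    simpa [Nat.lt_succ_iff] using hi)]

lemma natDegree_sum_CX_le {R : Type*} [CommRing R] (N : ℕ) (f : ℕ → R) :
    (∑ i ∈ Finset.range (N + 1), Polynomial.C (f i) * Polynomial.X ^ i).natDegree ≤ N := by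
  apply Polynomial.natDegree_sum_le_of_forall_le
  intro i hi
  refine le_trans (Polynomial.natDegree_C_mul_X_pow_le _ _) ?_
  simpa [Nat.lt_succ_iff] using hi

lemma key (n r : ℕ) (h2 : r ≤ n) :
    (∑ i ∈ Finset.range (n + 1),
        Polynomial.C (Ideal.Quotient.mk (Irn n r) ((-1) ^ i * MvPolynomial.C (cc n i))) *
          Polynomial.X ^ i) =
      (∑ i ∈ Finset.range (r + 1),
          Polynomial.C (Ideal.Quotient.mk (Irn n r) ((-1) ^ i * ee n r i)) *
            Polynomial.X ^ i) *
        (∑ i ∈ Finset.range (n - r + 1),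
          Polynomial.C (Ideal.Quotient.mk (Irn n r) (hcc n r i)) * Polynomial.X ^ i) := by
  set phi := Ideal.Quotient.mk (Irn n r) with hphi
  ext k
  rw [Polynomial.coeff_mul]
  simp only [coeff_sum_CX (R := Br n r ⧸ Irn n r)]
  by_cases hk : k ≤ n
  · rw [if_pos hk]
    have hconv := congrArg phi (conv n r k)
    rw [map_sum] at hconv
    rw [hconv]
    apply Finset.sum_congr rfl
    intro p hp
    have hpk : p.1 + p.2 = k := Finset.HasAntidiagonal.mem_antidiagonal.mp hp
    by_cases h1 : p.1 ≤ r
    · by_cases hb : p.2 ≤ n - r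
      · rw [if_pos h1, if_pos hb, map_mul]
      · have : phi (hcc n r p.2) = 0 := by
          rw [hphi, Ideal.Quotient.eq_zero_iff_mem]
          exact hcc_mem n r (by omega) (by omega)
        simp [map_mul, this, hb, h1]
    · have : ee n r p.1 = 0 := ee_eq_zero n r (by omega)
      simp only [map_mul, this, h1, map_zero, mul_zero, if_false]
      split <;> ring
  · rw [if_neg hk]
    symm
    apply Finset.sum_eq_zero
    intro p hp
    have hpk : p.1 + p.2 = k := Finset.HasAntidiagonal.mem_antidiagonal.mp hp
    by_cases h1 : p.1 ≤ r
    · simp only [h1, if_true, show ¬ p.2 ≤ n - r by omega, if_false]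
      ring
    · simp only [h1, if_false]
      split <;> ring

end Aux

/-- universal factorization of Xⁿ(c) in B_{r,n}(c)[X]. -/
theorem stmt0 (n r : ℕ) (h1 : 1 ≤ r) (h2 : r ≤ n) :
    (∑ i ∈ Finset.range (n + 1),
        Polynomial.C (Ideal.Quotient.mk (Irn n r) ((-1) ^ i * MvPolynomial.C (cc n i))) *
          Polynomial.X ^ (n - i)) =
      (∑ i ∈ Finset.range (r + 1),
          Polynomial.C (Ideal.Quotient.mk (Irn n r) ((-1) ^ i * ee n r i)) *
            Polynomial.X ^ (r - i)) *
        (∑ i ∈ Finset.range (n - r + 1),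
          Polynomial.C (Ideal.Quotient.mk (Irn n r) (hcc n r i)) *
            Polynomial.X ^ (n - r - i)) := by
  have hk := congrArg (Polynomial.reflect n) (key n r h2)
  have hmul := Polynomial.reflect_mul
      (∑ i ∈ Finset.range (r + 1),
        Polynomial.C (Ideal.Quotient.mk (Irn n r) ((-1) ^ i * ee n r i)) * Polynomial.X ^ i)
      (∑ i ∈ Finset.range (n - r + 1),
        Polynomial.C (Ideal.Quotient.mk (Irn n r) (hcc n r i)) * Polynomial.X ^ i)
      (natDegree_sum_CX_le (R := Br n r ⧸ Irn n r) r _) (natDegree_sum_CX_le (R := Br n r ⧸ Irn n r) (n - r) _)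
  rw [show r + (n - r) = n by omega] at hmul
  rw [hmul, reflect_sum_CX (R := Br n r ⧸ Irn n r), reflect_sum_CX (R := Br n r ⧸ Irn n r), reflect_sum_CX (R := Br n r ⧸ Irn n r)] at hk
  exact hk
end

section
/- If λ is a partition of length at most r with λ₁ ≥ n - r + 1, then the Schur determinant Δ_λ(Hᵣ(c)) = det(h_{λⱼ+i-j}(c))_{1≤i,j≤r} belongs to the ideal I_{r,n}(c) = (h_{n-r+1}(c), ..., hₙ(c)) of Bᵣ(c). -/
open PowerSeries Polynomial

set_option synthInstance.maxHeartbeats 1000000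
set_option maxHeartbeats 1000000

section AuxStmt11

lemma ee_eq_zero_s11 (n r p : ℕ) (hp : r < p + 1) : ee n r (p + 1) = 0 := by
  simp only [ee]
  rw [dif_neg (by omega)]

lemma hcc_rec (n r k : ℕ) (hk : n < k) :
    hcc n r k = -∑ p ∈ Finset.range k,
      ((-1) ^ (p + 1) * ee n r (p + 1)) * hcc n r (k - (p + 1)) := by
  have h0 : PowerSeries.coeff k (cser n r) = 0 := by
    simp only [cser, PowerSeries.coeff_mk]
    obtain ⟨i, rfl⟩ : ∃ i, k = i + 1 := ⟨k - 1, by omega⟩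
    have : cc n (i + 1) = 0 := by
      simp only [cc]
      rw [dif_neg (by omega)]
    rw [this]
    simp
  have h1 : Eser n r * (cser n r * Hser n r) = cser n r := by
    rw [mul_comm (cser n r), ← mul_assoc, Eser_mul_Hser, one_mul]
  have h2 := congrArg (PowerSeries.coeff k) h1
  rw [PowerSeries.coeff_mul, Finset.Nat.sum_antidiagonal_eq_sum_range_succ_mk, h0,
    Finset.sum_range_succ'] at h2
  simp only [Eser, PowerSeries.coeff_mk] at h2
  have h3 : ((-1 : Br n r) ^ 0 * ee n r 0) * PowerSeries.coeff (k - 0) (cser n r * Hser n r)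
      = hcc n r k := by
    simp [ee, hcc]
  rw [h3] at h2
  exact eq_neg_of_add_eq_zero_left ((add_comm _ _).trans h2)

lemma hcc_mem_s11 (n r : ℕ) (h1 : 1 ≤ r) (h2 : r ≤ n) :
    ∀ k, n - r + 1 ≤ k → hcc n r k ∈ Irn n r := by
  intro k
  induction k using Nat.strong_induction_on with
  | _ k ih =>
    intro hk
    by_cases hkn : k ≤ n
    · exact Ideal.subset_span ⟨k, ⟨hk, hkn⟩, rfl⟩
    · rw [hcc_rec n r k (by omega)]
      apply neg_mem
      apply Ideal.sum_mem
      intro p hp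
      simp only [Finset.mem_range] at hp
      by_cases hpr : p + 1 ≤ r
      · exact Ideal.mul_mem_left _ _ (ih (k - (p + 1)) (by omega) (by omega))
      · rw [ee_eq_zero_s11 n r p (by omega)]
        simp

end AuxStmt11

/-- if λ₁ ≥ n-r+1 then Δ_λ(Hᵣ(c)) ∈ I_{r,n}(c). -/
theorem stmt11 (n r : ℕ) (h1 : 1 ≤ r) (h2 : r ≤ n)
    (lam : Fin r → ℕ) (hlam : Antitone lam)
    (hl : n - r + 1 ≤ lam ⟨0, by omega⟩) : Dl n r lam ∈ Irn n r := by
  classical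
  rw [Dl, Matrix.det_apply]
  apply Ideal.sum_mem
  intro σ _
  rw [Units.smul_def, zsmul_eq_mul]
  apply Ideal.mul_mem_left
  set i0 : Fin r := ⟨0, by omega⟩ with hi0
  rw [← Finset.mul_prod_erase _ _ (Finset.mem_univ i0)]
  apply Ideal.mul_mem_right
  have hcoe : ((i0 : ℕ) : ℤ) = 0 := by simp [hi0]
  have hj : (0 : ℤ) ≤ (lam i0 : ℤ) + ((σ i0 : ℕ) : ℤ) - ((i0 : ℕ) : ℤ) := by
    rw [hcoe]; omega
  show hccZ n r ((lam i0 : ℤ) + ((σ i0 : ℕ) : ℤ) - ((i0 : ℕ) : ℤ)) ∈ Irn n r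
  rw [hccZ, if_pos hj]
  apply hcc_mem_s11 n r h1 h2
  have : n - r + 1 ≤ lam i0 := hl
  omega
end

section
/- For every 0 ≤ i, j ≤ n−1, the operator Xⁱ(c) ⊗ ∂ʲ(s) ∈ gl(Vₙ(c)), acting on Bᵣ(c) via the Laksov–Thorup isomorphism Bᵣ(c) ≅ ∧ʳV(c) and the formula (f⊗g)⋆u·[X(c)]ʳ₀ = f ∧ (g ⌟ u·[X(c)]ʳ₀), preserves the ideal I_{r,n}(c) = (h_{n-r+1}(c),...,hₙ(c)); hence the action descends to a well-defined action on the universal decomposition algebra B_{r,n}(c) = Bᵣ(c)/I_{r,n}(c). -/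
open PowerSeries Polynomial

set_option synthInstance.maxHeartbeats 1000000
set_option maxHeartbeats 1000000

noncomputable section

/-- s(w) = 1/c(w) ∈ B₀(c)[[w]] : sᵢ is the i-th coefficient. -/
def sc (n : ℕ) (i : ℕ) : B0 n :=
  PowerSeries.coeff i ((PowerSeries.mk fun i => (-1) ^ i * cc n i).invOfUnit 1)

/-- ∂ʲ(s) = ∑ᵢ sᵢ ∂^{i+j} : the coefficient of w⁻ʲ in s(w)∂(w⁻¹), defined by its
values ∂ʲ(s)(Xⁱ) = s_{i-j} (for i ≥ j) on the monomial basis. -/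
def ds (n : ℕ) (j : ℕ) : Polynomial (B0 n) →ₗ[B0 n] B0 n :=
  (Polynomial.basisMonomials (B0 n)).constr (B0 n)
    (fun i => if j ≤ i then sc n (i - j) else 0)

end
noncomputable section
/-- the r-th exterior power ∧ʳV(c): the span of the r-fold wedges. -/
def Wr (n r : ℕ) : Submodule (B0 n) (ExtA n) :=
  Submodule.span (B0 n) (Set.range (wedge n r))

/-- Vⁿ(c) ∧ ∧^{r-1}V(c), where Vⁿ(c) = span{Xʲ(c) : j ≥ n}. -/
def VnWedge (n r : ℕ) : Submodule (B0 n) (ExtA n) :=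
  Submodule.span (B0 n)
    {x | ∃ j : ℕ, n ≤ j ∧ ∃ g : Fin (r - 1) → Polynomial (B0 n),
      x = ExteriorAlgebra.ι (B0 n) (Xc n j) * wedge n (r - 1) g}
end
noncomputable section

lemma sc_key (n m : ℕ) (hm : 0 < m) :
    ∑ k ∈ Finset.range (m + 1), (-1 : B0 n) ^ k * cc n k * sc n (m - k) = 0 := by
  have h : (PowerSeries.mk fun i => (-1 : B0 n) ^ i * cc n i) *
      (PowerSeries.mk fun i => (-1 : B0 n) ^ i * cc n i).invOfUnit 1 = 1 := by
    apply PowerSeries.mul_invOfUnit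
    simp [cc]
  have h2 := congrArg (PowerSeries.coeff m) h
  rw [PowerSeries.coeff_mul, PowerSeries.coeff_one, if_neg hm.ne',
    Finset.Nat.sum_antidiagonal_eq_sum_range_succ_mk] at h2
  simpa [sc, mul_assoc] using h2

lemma ds_X_pow (n j m : ℕ) :
    ds n j (Polynomial.X ^ m) = if j ≤ m then sc n (m - j) else 0 := by
  have h : (Polynomial.X ^ m : Polynomial (B0 n)) = Polynomial.basisMonomials (B0 n) m := by
    rw [Polynomial.coe_basisMonomials, Polynomial.X_pow_eq_monomial]
  rw [ds, h, Module.Basis.constr_basis]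

lemma ds_Xc (n j j' : ℕ) (hj : j < n) (hj' : n ≤ j') : ds n j (Xc n j') = 0 := by
  have hjj : j < j' := lt_of_lt_of_le hj hj'
  rw [Xc, map_sum]
  have step : ∀ k ∈ Finset.range (j' + 1),
      ds n j ((-1 : Polynomial (B0 n)) ^ k * Polynomial.C (cc n k) * Polynomial.X ^ (j' - k)) =
      (-1 : B0 n) ^ k * cc n k * (if j ≤ j' - k then sc n (j' - k - j) else 0) := by
    intro k _
    have h : ((-1 : Polynomial (B0 n)) ^ k * Polynomial.C (cc n k) * Polynomial.X ^ (j' - k))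
        = ((-1 : B0 n) ^ k * cc n k) • (Polynomial.X ^ (j' - k) : Polynomial (B0 n)) := by
      rw [Polynomial.smul_eq_C_mul, map_mul, map_pow, map_neg, map_one]
    rw [h, map_smul, ds_X_pow, smul_eq_mul]
  rw [Finset.sum_congr rfl step]
  have hsub : Finset.range (j' - j + 1) ⊆ Finset.range (j' + 1) :=
    Finset.range_subset_range.2 (by omega)
  rw [← Finset.sum_subset hsub (fun k hk1 hk2 => by
    rw [Finset.mem_range] at hk1 hk2
    rw [if_neg (by omega), mul_zero])]
  have step2 : ∀ k ∈ Finset.range (j' - j + 1),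
      (-1 : B0 n) ^ k * cc n k * (if j ≤ j' - k then sc n (j' - k - j) else 0) =
      (-1 : B0 n) ^ k * cc n k * sc n (j' - j - k) := by
    intro k hk
    rw [Finset.mem_range] at hk
    rw [if_pos (by omega)]
    congr 2
    omega
  rw [Finset.sum_congr rfl step2]
  exact sc_key n (j' - j) (by omega)

lemma mul_wedge_mem (n m : ℕ) (v : Polynomial (B0 n)) {x : ExtA n} (hx : x ∈ Wr n m) :
    ExteriorAlgebra.ι (B0 n) v * x ∈ Wr n (m + 1) := by
  induction hx using Submodule.span_induction with
  | mem x hxg =>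
    obtain ⟨g, rfl⟩ := hxg
    apply Submodule.subset_span
    refine ⟨Fin.cons v g, ?_⟩
    rw [wedge, wedge, ExteriorAlgebra.ιMulti_succ_apply]
    simp [Matrix.vecTail, Function.comp_def]
  | zero => rw [mul_zero]; exact Submodule.zero_mem _
  | add a b _ _ ha hb => rw [mul_add]; exact Submodule.add_mem _ ha hb
  | smul c a _ ha => rw [mul_smul_comm]; exact Submodule.smul_mem _ _ ha

lemma contract_wedge_mem (n : ℕ) (d : Polynomial (B0 n) →ₗ[B0 n] B0 n) (m : ℕ)
    (g : Fin (m + 1) → Polynomial (B0 n)) :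
    CliffordAlgebra.contractLeft (Q := (0 : QuadraticForm (B0 n) (Polynomial (B0 n)))) d
      (wedge n (m + 1) g) ∈ Wr n m := by
  induction m with
  | zero =>
    rw [wedge, ExteriorAlgebra.ιMulti_succ_apply, ExteriorAlgebra.ιMulti_zero_apply, mul_one,
      CliffordAlgebra.contractLeft_ι, Algebra.algebraMap_eq_smul_one]
    refine Submodule.smul_mem _ _ (Submodule.subset_span ⟨fun i => i.elim0, ?_⟩)
    rw [wedge, ExteriorAlgebra.ιMulti_zero_apply]
  | succ m ih =>
    rw [wedge, ExteriorAlgebra.ιMulti_succ_apply, CliffordAlgebra.contractLeft_ι_mul]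
    refine Submodule.sub_mem _ (Submodule.smul_mem _ _
      (Submodule.subset_span ⟨Matrix.vecTail g, rfl⟩)) ?_
    exact mul_wedge_mem n m (g 0) (ih (Matrix.vecTail g))

end

noncomputable section

lemma mul_contract_wedge_mem (n : ℕ) (d : Polynomial (B0 n) →ₗ[B0 n] B0 n) (m : ℕ)
    (v : Polynomial (B0 n)) (g : Fin m → Polynomial (B0 n)) :
    ExteriorAlgebra.ι (B0 n) v *
      CliffordAlgebra.contractLeft (Q := (0 : QuadraticForm (B0 n) (Polynomial (B0 n)))) d
        (wedge n m g) ∈ Wr n m := by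
  cases m with
  | zero =>
    have h1 : wedge n 0 g = 1 := ExteriorAlgebra.ιMulti_zero_apply (R := B0 n) g
    rw [h1, CliffordAlgebra.contractLeft_one, mul_zero]
    exact Submodule.zero_mem _
  | succ m => exact mul_wedge_mem n m v (contract_wedge_mem n d m g)

lemma mul_Wr_mem_VnWedge (n r' j' : ℕ) (hj' : n ≤ j') {z : ExtA n} (hz : z ∈ Wr n r') :
    ExteriorAlgebra.ι (B0 n) (Xc n j') * z ∈ VnWedge n (r' + 1) := by
  induction hz using Submodule.span_induction with
  | mem x hxg =>
    obtain ⟨g, rfl⟩ := hxg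
    exact Submodule.subset_span ⟨j', hj', g, rfl⟩
  | zero => rw [mul_zero]; exact Submodule.zero_mem _
  | add a b _ _ ha hb => rw [mul_add]; exact Submodule.add_mem _ ha hb
  | smul c a _ ha => rw [mul_smul_comm]; exact Submodule.smul_mem _ _ ha

end

/-- for 0 ≤ i,j ≤ n-1 the operator Xⁱ(c)⊗∂ʲ(s), acting on ∧ʳV(c)
by u ↦ Xⁱ(c) ∧ (∂ʲ(s) ⌟ u), preserves the submodule Vⁿ(c)∧∧^{r-1}V(c)
corresponding to the ideal I_{r,n}(c); hence it descends to B_{r,n}(c). -/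
theorem stmt14 (n r : ℕ) (h1 : 1 ≤ r) (h2 : r ≤ n)
    (i j : ℕ) (hi : i ≤ n - 1) (hj : j ≤ n - 1)
    (x : ExtA n) (hx : x ∈ VnWedge n r) :
    ExteriorAlgebra.ι (B0 n) (Xc n i) *
        CliffordAlgebra.contractLeft (Q := (0 : QuadraticForm (B0 n) (Polynomial (B0 n))))
          (ds n j) x ∈ VnWedge n r := by
  obtain ⟨r', rfl⟩ : ∃ r', r = r' + 1 := ⟨r - 1, by omega⟩
  induction hx using Submodule.span_induction with
  | mem x hxg =>
    obtain ⟨j', hj', g, rfl⟩ := hxg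
    have hd : ds n j (Xc n j') = 0 := ds_Xc n j j' (by omega) hj'
    have hc : CliffordAlgebra.contractLeft
          (Q := (0 : QuadraticForm (B0 n) (Polynomial (B0 n)))) (ds n j)
          (ExteriorAlgebra.ι (B0 n) (Xc n j') * wedge n (r' + 1 - 1) g)
        = -(ExteriorAlgebra.ι (B0 n) (Xc n j') *
            CliffordAlgebra.contractLeft
              (Q := (0 : QuadraticForm (B0 n) (Polynomial (B0 n)))) (ds n j)
              (wedge n (r' + 1 - 1) g)) := by
      rw [CliffordAlgebra.contractLeft_ι_mul, hd, zero_smul, zero_sub]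
    rw [hc, mul_neg, ← mul_assoc,
      eq_neg_of_add_eq_zero_left (ExteriorAlgebra.ι_add_mul_swap (Xc n i) (Xc n j')),
      neg_mul, neg_neg, mul_assoc]
    exact mul_Wr_mem_VnWedge n r' j' hj'
      (mul_contract_wedge_mem n (ds n j) r' (Xc n i) g)
  | zero => rw [map_zero, mul_zero]; exact Submodule.zero_mem _
  | add a b _ _ ha hb => rw [map_add, mul_add]; exact Submodule.add_mem _ ha hb
  | smul c a _ ha => rw [map_smul, mul_smul_comm]; exact Submodule.smul_mem _ _ ha
end

section
/- (Eigenvalue property of the Schubert derivation) Let σ₊(z) = exp(∑_{i≥1}(1/i)δ(Xⁱ)zⁱ) be the Hasse–Schmidt derivation on ∧V(c) whose degree-i component restricted to V(c) is multiplication by Xⁱ, and endow ∧ʳV(c) with the Bᵣ(c)-module structure hᵢu = σᵢu. Then for every u ∈ ∧ʳV(c), applying σ₊(z) to u yields (1/Eᵣ(z))·u in the sense that σ₊(z)u = Hᵣ(z)u = (∑ⱼhⱼzʲ)u, i.e. ∧ʳV(c) is an 'eigenspace' of σ₊(z) with eigenvalue 1/Eᵣ(z). -/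
open PowerSeries Polynomial

set_option synthInstance.maxHeartbeats 1000000
set_option maxHeartbeats 1000000

section Aux

lemma comb {M : Type*} [AddCommGroup M] (r m : ℕ) (hm : 0 < m) (F : (Fin r → ℕ) → M) :
    ∑ i ∈ Finset.range (m + 1), (-1 : ℤ) ^ i •
      ∑ S ∈ Finset.powersetCard i (Finset.univ : Finset (Fin r)),
        ∑ d ∈ Finset.Nat.antidiagonalTuple r (m - i),
          F (fun j => d j + if j ∈ S then 1 else 0) = 0 := by
  have hsum : ∀ S : Finset (Fin r), ∑ j : Fin r, (if j ∈ S then 1 else 0) = S.card := by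
    intro S
    rw [Finset.sum_ite_mem, Finset.univ_inter, Finset.sum_const, smul_eq_mul, mul_one]
  have key : ∑ i ∈ Finset.range (m + 1),
      ∑ S ∈ Finset.powersetCard i (Finset.univ : Finset (Fin r)),
        ∑ d ∈ Finset.Nat.antidiagonalTuple r (m - i),
          (-1 : ℤ) ^ i • F (fun j => d j + if j ∈ S then 1 else 0)
      = ∑ e ∈ Finset.Nat.antidiagonalTuple r m,
          ∑ S ∈ (Finset.univ.filter (fun j => e j ≠ 0)).powerset,
            (-1 : ℤ) ^ S.card • F e := by
    simp only [Finset.sum_sigma']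
    refine Finset.sum_nbij'
      (fun x => ⟨fun j => x.2.2 j + if j ∈ x.2.1 then 1 else 0, x.2.1⟩)
      (fun y => ⟨y.2.card, y.2, fun j => y.1 j - if j ∈ y.2 then 1 else 0⟩)
      ?_ ?_ ?_ ?_ ?_
    · rintro ⟨i, S, d⟩ hx
      simp only [Finset.mem_sigma, Finset.mem_range, Finset.mem_powersetCard,
        Finset.Nat.mem_antidiagonalTuple] at hx
      obtain ⟨hi, ⟨⟨hS, hcard⟩, hd⟩⟩ := hx
      simp only [Finset.mem_sigma, Finset.Nat.mem_antidiagonalTuple, Finset.mem_powerset]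
      constructor
      · rw [Finset.sum_add_distrib, hd, hsum S, hcard]
        omega
      · intro j hj
        simp [hj]
    · rintro ⟨e, S⟩ hy
      simp only [Finset.mem_sigma, Finset.mem_powerset,
        Finset.Nat.mem_antidiagonalTuple] at hy
      obtain ⟨he, hSs⟩ := hy
      have hpos : ∀ j ∈ S, 1 ≤ e j := by
        intro j hj
        have := hSs hj
        simp only [Finset.mem_filter] at this
        omega
      have hcard : S.card ≤ m := by
        calc S.card = ∑ j ∈ S, 1 := (Finset.card_eq_sum_ones S)
        _ ≤ ∑ j ∈ S, e j := Finset.sum_le_sum hpos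
        _ ≤ ∑ j : Fin r, e j := Finset.sum_le_sum_of_subset (Finset.subset_univ S)
        _ = m := he
      simp only [Finset.mem_sigma, Finset.mem_range, Finset.mem_powersetCard,
        Finset.Nat.mem_antidiagonalTuple]
      refine ⟨by omega, ⟨Finset.subset_univ S, by trivial⟩, ?_⟩
      rw [Finset.sum_tsub_distrib _ (fun j _ => by by_cases h : j ∈ S <;> simp [h, hpos j])]
      rw [he, hsum S]
    · rintro ⟨i, S, d⟩ hx
      simp only [Finset.mem_sigma, Finset.mem_range, Finset.mem_powersetCard,
        Finset.Nat.mem_antidiagonalTuple] at hx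
      obtain ⟨hi, ⟨⟨hS, hcard⟩, hd⟩⟩ := hx
      subst hcard
      have hf : (fun j => (d j + if j ∈ S then 1 else 0) - if j ∈ S then 1 else 0) = d := by
        funext j
        by_cases h : j ∈ S <;> simp [h]
      beta_reduce
      rw [hf]
    · rintro ⟨e, S⟩ hy
      simp only [Finset.mem_sigma, Finset.mem_powerset,
        Finset.Nat.mem_antidiagonalTuple] at hy
      obtain ⟨he, hSs⟩ := hy
      have hf : (fun j => (e j - if j ∈ S then 1 else 0) + if j ∈ S then 1 else 0) = e := by
        funext j
        by_cases h : j ∈ S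
        · have := hSs h
          simp only [Finset.mem_filter] at this
          simp [h]
          omega
        · simp [h]
      beta_reduce
      rw [hf]
    · rintro ⟨i, S, d⟩ hx
      simp only [Finset.mem_sigma, Finset.mem_range, Finset.mem_powersetCard] at hx
      rw [hx.2.1.2]
  have rhs0 : ∑ e ∈ Finset.Nat.antidiagonalTuple r m,
      ∑ S ∈ (Finset.univ.filter (fun j => e j ≠ 0)).powerset,
        (-1 : ℤ) ^ S.card • F e = 0 := by
    refine Finset.sum_eq_zero fun e he => ?_
    rw [← Finset.sum_smul, Finset.sum_powerset_neg_one_pow_card, if_neg, zero_smul]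
    intro hemp
    rw [Finset.Nat.mem_antidiagonalTuple] at he
    have hz : ∀ j : Fin r, e j = 0 := by
      intro j
      by_contra h
      have : j ∈ Finset.univ.filter (fun j => e j ≠ 0) := by simp [h]
      simp [hemp] at this
    simp [hz] at he
    omega
  calc ∑ i ∈ Finset.range (m + 1), (-1 : ℤ) ^ i •
      ∑ S ∈ Finset.powersetCard i (Finset.univ : Finset (Fin r)),
        ∑ d ∈ Finset.Nat.antidiagonalTuple r (m - i),
          F (fun j => d j + if j ∈ S then 1 else 0)
      = ∑ i ∈ Finset.range (m + 1),
      ∑ S ∈ Finset.powersetCard i (Finset.univ : Finset (Fin r)),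
        ∑ d ∈ Finset.Nat.antidiagonalTuple r (m - i),
          (-1 : ℤ) ^ i • F (fun j => d j + if j ∈ S then 1 else 0) := by
        simp [Finset.smul_sum]
    _ = 0 := key.trans rhs0

lemma hpl_zero (n r : ℕ) : hpl n r 0 = 1 := by
  rw [hpl, Hser, PowerSeries.coeff_zero_eq_constantCoeff, PowerSeries.constantCoeff_invOfUnit]
  simp

lemma key_conv (n r m : ℕ) (hm : 0 < m) :
    ∑ k ∈ Finset.range (m + 1), (-1 : ℤ) ^ k • (ee n r k * hpl n r (m - k)) = 0 := by
  have h1 : PowerSeries.constantCoeff (Eser n r) = ((1 : (Br n r)ˣ) : Br n r) := by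
    rw [← PowerSeries.coeff_zero_eq_constantCoeff, Eser, PowerSeries.coeff_mk]
    simp [ee]
  have h3 := congrArg (PowerSeries.coeff m)
    (PowerSeries.mul_invOfUnit (Eser n r) 1 h1)
  rw [PowerSeries.coeff_mul, PowerSeries.coeff_one,
    Finset.Nat.sum_antidiagonal_eq_sum_range_succ_mk, if_neg (by omega)] at h3
  simp only [Eser, PowerSeries.coeff_mk] at h3
  rw [← h3]
  refine Finset.sum_congr rfl fun k _ => ?_
  rw [zsmul_eq_mul]
  push_cast
  simp only [hpl, Hser, Eser]
  ring

end Aux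

/-- the eigenvalue property of the Schubert derivation: on ∧ʳV(c),
the m-th component σₘ of σ₊(z) (whose value on a wedge v₁∧⋯∧vᵣ is
∑_{i₁+⋯+iᵣ=m} X^{i₁}v₁∧⋯∧X^{iᵣ}vᵣ) coincides with multiplication by hₘ in the
Laksov–Thorup module structure, i.e. σ₊(z)u = Hᵣ(z)u = (1/Eᵣ(z))u. -/
theorem stmt16 (n r : ℕ)
    (act : Br n r →ₐ[B0 n] Module.End (B0 n) (ExtA n)) (hact : ActSpec n r act)
    (m : ℕ) (g : Fin r → Polynomial (B0 n)) :
    act (hpl n r m) (wedge n r g) =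
      ∑ d ∈ Finset.Nat.antidiagonalTuple r m,
        wedge n r fun j => Polynomial.X ^ d j * g j := by
  induction m using Nat.strong_induction_on with
  | _ m IH =>
  rcases Nat.eq_zero_or_pos m with hm | hm
  · subst hm
    rw [hpl_zero, map_one, Module.End.one_apply,
      Finset.Nat.antidiagonalTuple_zero_right, Finset.sum_singleton]
    congr 1
    funext j
    simp
  · -- key algebraic identity applied to wedge g
    have hkey : ∑ k ∈ Finset.range (m + 1),
        (-1 : ℤ) ^ k • (act (ee n r k)) ((act (hpl n r (m - k))) (wedge n r g)) = 0 := by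
      have h := congrArg act (key_conv n r m hm)
      rw [map_sum, map_zero] at h
      simp only [map_zsmul, map_mul] at h
      have h2 := congrArg (fun f : Module.End (B0 n) (ExtA n) => f (wedge n r g)) h
      simpa only [LinearMap.sum_apply, LinearMap.smul_apply, Module.End.mul_apply,
        LinearMap.zero_apply] using h2
    rw [Finset.sum_range_succ'] at hkey
    simp only [pow_zero, one_smul, Nat.sub_zero, show ee n r 0 = 1 from rfl, map_one,
      Module.End.one_apply] at hkey
    have hcomb := comb r m hm (fun e => wedge n r fun j => Polynomial.X ^ e j * g j)
    rw [Finset.sum_range_succ'] at hcomb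
    simp only [pow_zero, one_smul, Nat.sub_zero, Finset.powersetCard_zero,
      Finset.sum_singleton, Finset.notMem_empty, if_false, add_zero] at hcomb
    rw [eq_neg_of_add_eq_zero_right hkey, eq_neg_of_add_eq_zero_right hcomb, neg_inj]
    refine Finset.sum_congr rfl fun k _ => ?_
    congr 1
    by_cases hk : k < r
    · rw [show ee n r (k + 1) = MvPolynomial.X (⟨k, hk⟩ : Fin r) from by simp [ee, hk]]
      rw [IH (m - (k + 1)) (by omega)]
      rw [map_sum]
      rw [show (∑ d ∈ Finset.Nat.antidiagonalTuple r (m - (k + 1)),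
          (act (MvPolynomial.X (⟨k, hk⟩ : Fin r)))
            (wedge n r fun j => Polynomial.X ^ d j * g j))
        = ∑ d ∈ Finset.Nat.antidiagonalTuple r (m - (k + 1)),
            ∑ S ∈ Finset.powersetCard (k + 1) (Finset.univ : Finset (Fin r)),
              wedge n r fun j => if j ∈ S then Polynomial.X * (Polynomial.X ^ d j * g j)
                else Polynomial.X ^ d j * g j from
          Finset.sum_congr rfl fun d _ => hact ⟨k, hk⟩ _]
      rw [Finset.sum_comm]
      refine Finset.sum_congr rfl fun S _ => Finset.sum_congr rfl fun d _ => ?_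
      congr 1
      funext j
      by_cases h : j ∈ S
      · simp only [h, if_true, pow_succ]
        ring
      · simp [h]
    · rw [show ee n r (k + 1) = 0 from by simp [ee, hk]]
      rw [map_zero, LinearMap.zero_apply,
        Finset.powersetCard_eq_empty.mpr (by simp; omega), Finset.sum_empty]
end

section
/- (Wedging with the fundamental monomial shifts partitions) For k ≥ 1 and a partition λ of length at most r with λᵣ ≥ k, one has [X]ᵏ₀ ∧ [X(c)]ʳ_λ-type identity: X^{k-1} ∧ ⋯ ∧ X⁰ ∧ (X^{r-1+λ₁}(c) ∧ ⋯ ∧ X^{λᵣ}(c)) = ± [X(c)]^{r+k}_{λ-(kʳ)}, the basis element of ∧^{r+k}V(c) indexed by the partition (λ₁−k, ..., λᵣ−k) padded with k zeros; the expression vanishes if λᵣ < k. -/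
open PowerSeries Polynomial

set_option synthInstance.maxHeartbeats 1000000
set_option maxHeartbeats 1000000

noncomputable section Stmt17Aux

lemma append_apply' {α : Type*} {p q : ℕ} (f : Fin p → α) (g : Fin q → α) (j : Fin (p + q)) :
    Fin.append f g j = if h : (j : ℕ) < p then f ⟨j, h⟩
      else g ⟨(j : ℕ) - p, by have := j.isLt; omega⟩ := by
  rcases lt_or_ge (j : ℕ) p with h | h
  · rw [dif_pos h]
    have hj : j = Fin.castAdd q ⟨(j : ℕ), h⟩ := by ext; rfl
    conv_lhs => rw [hj, Fin.append_left]
  · rw [dif_neg (by omega)]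
    have hj : j = Fin.natAdd p ⟨(j : ℕ) - p, by have := j.isLt; omega⟩ := by
      ext; simp only [Fin.natAdd_mk]; omega
    conv_lhs => rw [hj, Fin.append_right]

lemma wedge_mul (n : ℕ) {p q : ℕ} (f : Fin p → Polynomial (B0 n))
    (g : Fin q → Polynomial (B0 n)) :
    wedge n p f * wedge n q g = wedge n (p + q) (Fin.append f g) := by
  simp only [wedge, ExteriorAlgebra.ιMulti_apply]
  have hfun : (fun i => ExteriorAlgebra.ι (B0 n) (Fin.append f g i)) =
      Fin.append (fun i => ExteriorAlgebra.ι (B0 n) (f i))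
        (fun i => ExteriorAlgebra.ι (B0 n) (g i)) := by
    funext i
    rw [append_apply', append_apply']
    split <;> rfl
  rw [hfun, List.ofFn_fin_append, List.prod_append]

lemma wedge_cast (n : ℕ) {p q : ℕ} (h : p = q) (v : Fin q → Polynomial (B0 n)) :
    wedge n p (v ∘ Fin.cast h) = wedge n q v := by
  subst h; rfl

lemma block_step (n m : ℕ) (t : ℕ) (ht : t ≤ m) :
    wedge n m (fun i => if (i : ℕ) < t then Xc n (m - 1 - (i : ℕ))
        else Polynomial.X ^ (m - 1 - (i : ℕ))) =
      wedge n m (fun i => (Polynomial.X : Polynomial (B0 n)) ^ (m - 1 - (i : ℕ))) := by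
  induction t with
  | zero => simp
  | succ t ih =>
    have ht' : t < m := ht
    rw [← ih (le_of_lt ht')]
    set f : Fin m → Polynomial (B0 n) := fun i =>
      if (i : ℕ) < t then Xc n (m - 1 - (i : ℕ)) else Polynomial.X ^ (m - 1 - (i : ℕ)) with hfdef
    have hupd : (fun i : Fin m => if (i : ℕ) < t + 1 then Xc n (m - 1 - (i : ℕ))
        else Polynomial.X ^ (m - 1 - (i : ℕ))) =
        Function.update f ⟨t, ht'⟩ (Xc n (m - 1 - t)) := by
      funext i
      rcases eq_or_ne i ⟨t, ht'⟩ with rfl | hne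
      · rw [Function.update_self, if_pos (show ((⟨t, ht'⟩ : Fin m) : ℕ) < t + 1 by
          simp only [Fin.val_mk]; omega)]
      · rw [Function.update_of_ne hne]
        have hv : (i : ℕ) ≠ t := fun hh => hne (Fin.ext hh)
        by_cases hi : (i : ℕ) < t
        · simp only [hfdef, if_pos hi, if_pos (Nat.lt_succ_of_lt hi)]
        · simp only [hfdef, if_neg hi, if_neg (show ¬ (i : ℕ) < t + 1 by omega)]
    rw [hupd]
    have hXc : Xc n (m - 1 - t) = ∑ i ∈ Finset.range (m - 1 - t + 1),
        (-1 : Polynomial (B0 n)) ^ i * Polynomial.C (cc n i) * Polynomial.X ^ (m - 1 - t - i) :=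
      rfl
    rw [hXc]
    simp only [wedge]
    rw [AlternatingMap.map_update_sum, Finset.sum_range_succ']
    have hz : ∀ i ∈ Finset.range (m - 1 - t),
        (ExteriorAlgebra.ιMulti (B0 n) m) (Function.update f ⟨t, ht'⟩
          ((-1 : Polynomial (B0 n)) ^ (i + 1) * Polynomial.C (cc n (i + 1)) *
            Polynomial.X ^ (m - 1 - t - (i + 1)))) = 0 := by
      intro i hi
      rw [Finset.mem_range] at hi
      have hidx : t + (i + 1) < m := by omega
      have hsm : (-1 : Polynomial (B0 n)) ^ (i + 1) * Polynomial.C (cc n (i + 1)) *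
          Polynomial.X ^ (m - 1 - t - (i + 1))
          = ((-1 : B0 n) ^ (i + 1) * cc n (i + 1)) •
            (Polynomial.X ^ (m - 1 - t - (i + 1)) : Polynomial (B0 n)) := by
        rw [Polynomial.smul_eq_C_mul, map_mul, map_pow, map_neg, map_one]
      rw [hsm, AlternatingMap.map_update_smul]
      have hfe : (Polynomial.X ^ (m - 1 - t - (i + 1)) : Polynomial (B0 n))
          = f ⟨t + (i + 1), hidx⟩ := by
        simp only [hfdef]
        rw [if_neg (show ¬ ((⟨t + (i + 1), hidx⟩ : Fin m) : ℕ) < t by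
          simp only [Fin.val_mk]; omega)]
        congr 1
        omega
      have hzero : (ExteriorAlgebra.ιMulti (B0 n) m)
          (Function.update f ⟨t, ht'⟩ (f ⟨t + (i + 1), hidx⟩)) = 0 :=
        AlternatingMap.map_eq_zero_of_eq _ _
          (i := (⟨t, ht'⟩ : Fin m)) (j := (⟨t + (i + 1), hidx⟩ : Fin m))
          (by rw [Function.update_self,
            Function.update_of_ne (Fin.ne_of_val_ne (show t + (i + 1) ≠ t by omega))])
          (Fin.ne_of_val_ne (show t ≠ t + (i + 1) by omega))
      rw [hfe, hzero, smul_zero]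
    rw [Finset.sum_congr rfl hz, Finset.sum_const_zero, zero_add]
    have h0 : ((-1 : Polynomial (B0 n)) ^ 0 * Polynomial.C (cc n 0) *
        Polynomial.X ^ (m - 1 - t - 0)) = f ⟨t, ht'⟩ := by
      simp [hfdef, cc]
    rw [h0, Function.update_eq_self]

lemma blockXc (n m : ℕ) :
    wedge n m (fun i => (Polynomial.X : Polynomial (B0 n)) ^ (m - 1 - (i : ℕ))) =
      wedge n m (fun i => Xc n (m - 1 - (i : ℕ))) := by
  have hfun : (fun i : Fin m => if (i : ℕ) < m then Xc n (m - 1 - (i : ℕ))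
      else Polynomial.X ^ (m - 1 - (i : ℕ))) =
      fun i : Fin m => Xc n (m - 1 - (i : ℕ)) := by
    funext i
    exact if_pos i.isLt
  rw [← block_step n m m le_rfl, hfun]

open Fin.NatCast in
lemma rot_pow_apply (m k : ℕ) : ∀ i : Fin (m + 1),
    ((finRotate (m + 1)) ^ k) i = i + (k : Fin (m + 1)) := by
  induction k with
  | zero => intro i; simp
  | succ k ih =>
    intro i
    rw [pow_succ, Equiv.Perm.mul_apply, finRotate_succ_apply, ih, Nat.cast_add,
      Nat.cast_one, add_assoc, add_comm (1 : Fin (m + 1)) (k : Fin (m + 1))]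

open Fin.NatCast in
lemma rot_pow_val (N k : ℕ) (hN : 0 < N) (i : Fin N) :
    ((((finRotate N) ^ k) i : Fin N) : ℕ) = ((i : ℕ) + k) % N := by
  obtain ⟨m, rfl⟩ : ∃ m, N = m + 1 := ⟨N - 1, by omega⟩
  rw [rot_pow_apply, Fin.val_add, Fin.val_natCast]
  conv_rhs => rw [Nat.add_mod, Nat.mod_eq_of_lt i.isLt]

lemma sign_rot_pow (N k : ℕ) (hN : 0 < N) :
    Equiv.Perm.sign ((finRotate N) ^ k) = (-1 : ℤˣ) ^ ((N - 1) * k) := by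
  obtain ⟨m, rfl⟩ : ∃ m, N = m + 1 := ⟨N - 1, by omega⟩
  rw [map_pow, sign_finRotate, ← pow_mul]

end Stmt17Aux

/-- wedging with [X]ᵏ₀ = X^{k-1}∧⋯∧X⁰ shifts partitions:
[X]ᵏ₀ ∧ [X(c)]ʳ_λ = ± [X(c)]^{r+k}_{λ-(kʳ)} if λᵣ ≥ k, and vanishes if λᵣ < k. -/
theorem stmt17 (n r k : ℕ) (hk : 1 ≤ k) (hr : 1 ≤ r)
    (lam : Fin r → ℕ) (hlam : Antitone lam) :
    (k ≤ lam ⟨r - 1, by omega⟩ →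
      wedge n k (fun i => Polynomial.X ^ (k - 1 - (i : ℕ))) *
          wedge n r (fun j => Xc n (r - 1 - (j : ℕ) + lam j)) =
        ((-1 : ℤ) ^ (k * r)) •
          wedge n (r + k) (fun j => Xc n (r + k - 1 - (j : ℕ) +
            (if h : (j : ℕ) < r then lam ⟨j, h⟩ - k else 0)))) ∧
    (lam ⟨r - 1, by omega⟩ < k →
      wedge n k (fun i => Polynomial.X ^ (k - 1 - (i : ℕ))) *
          wedge n r (fun j => Xc n (r - 1 - (j : ℕ) + lam j)) = 0) := by
  have hN : 0 < k + r := by omega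
  have hmul : wedge n k (fun i => (Polynomial.X : Polynomial (B0 n)) ^ (k - 1 - (i : ℕ))) *
      wedge n r (fun j => Xc n (r - 1 - (j : ℕ) + lam j)) =
      wedge n (k + r) (Fin.append (fun i : Fin k => Xc n (k - 1 - (i : ℕ)))
        (fun j : Fin r => Xc n (r - 1 - (j : ℕ) + lam j))) := by
    rw [blockXc, wedge_mul]
  constructor
  · intro hge
    have hlamk : ∀ j : Fin r, k ≤ lam j := by
      intro j
      refine le_trans hge (hlam ?_)
      rw [Fin.le_def]
      simp only [Fin.val_mk]
      have := j.isLt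
      omega
    rw [hmul]
    set σ : Equiv.Perm (Fin (k + r)) := (finRotate (k + r)) ^ k with hσ
    have hcomp : (Fin.append (fun i : Fin k => Xc n (k - 1 - (i : ℕ)))
        (fun j : Fin r => Xc n (r - 1 - (j : ℕ) + lam j))) ∘ σ =
        (fun j : Fin (r + k) => Xc n (r + k - 1 - (j : ℕ) +
          (if h : (j : ℕ) < r then lam ⟨j, h⟩ - k else 0))) ∘
          Fin.cast (show k + r = r + k by omega) := by
      funext i
      have hval : ((σ i : Fin (k + r)) : ℕ) = ((i : ℕ) + k) % (k + r) :=
        rot_pow_val (k + r) k hN i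
      simp only [Function.comp_apply]
      rcases lt_or_ge (i : ℕ) r with hi | hi
      · have key : σ i = Fin.natAdd k ⟨(i : ℕ), hi⟩ := by
          apply Fin.ext
          rw [hval, Fin.coe_natAdd]
          simp only [Fin.val_mk]
          rw [Nat.mod_eq_of_lt (by omega)]
          omega
        rw [key, Fin.append_right]
        simp only [Fin.coe_cast]
        rw [dif_pos hi]
        have h1 := hlamk ⟨(i : ℕ), hi⟩
        congr 1
        omega
      · have hi2 := i.isLt
        have key : σ i = Fin.castAdd r ⟨(i : ℕ) - r, by omega⟩ := by
          apply Fin.ext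
          rw [hval, Fin.coe_castAdd]
          simp only [Fin.val_mk]
          rw [Nat.mod_eq_sub_mod (by omega), Nat.mod_eq_of_lt (by omega)]
          omega
        rw [key, Fin.append_left]
        simp only [Fin.coe_cast]
        rw [dif_neg (by omega)]
        congr 1
        omega
    have hperm : wedge n (k + r) ((Fin.append (fun i : Fin k => Xc n (k - 1 - (i : ℕ)))
        (fun j : Fin r => Xc n (r - 1 - (j : ℕ) + lam j))) ∘ σ) =
        Equiv.Perm.sign σ • wedge n (k + r) (Fin.append (fun i : Fin k => Xc n (k - 1 - (i : ℕ)))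
          (fun j : Fin r => Xc n (r - 1 - (j : ℕ) + lam j))) :=
      AlternatingMap.map_perm _ _ σ
    rw [← wedge_cast n (show k + r = r + k by omega), ← hcomp, hperm, hσ,
      sign_rot_pow (k + r) k hN, Units.smul_def, smul_smul]
    obtain ⟨k', rfl⟩ : ∃ k', k = k' + 1 := ⟨k - 1, by omega⟩
    have hcast : (((-1 : ℤˣ) ^ ((k' + 1 + r - 1) * (k' + 1)) : ℤˣ) : ℤ) =
        (-1 : ℤ) ^ ((k' + 1 + r - 1) * (k' + 1)) := by
      rw [Units.val_pow_eq_pow_val]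
      norm_num
    rw [hcast, ← pow_add]
    have hexp : (k' + 1) * r + (k' + 1 + r - 1) * (k' + 1) =
        2 * ((k' + 1) * r) + k' * (k' + 1) := by
      have h1 : k' + 1 + r - 1 = k' + r := by omega
      rw [h1]; ring
    rw [hexp]
    have heven : Even (2 * ((k' + 1) * r) + k' * (k' + 1)) :=
      (even_two_mul _).add (Nat.even_mul_succ_self k')
    rw [heven.neg_one_pow, one_smul]
  · intro hlt
    rw [hmul]
    simp only [wedge]
    refine AlternatingMap.map_eq_zero_of_eq _ _
      (i := Fin.castAdd r (⟨k - 1 - lam ⟨r - 1, by omega⟩, by omega⟩ : Fin k))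
      (j := Fin.natAdd k (⟨r - 1, by omega⟩ : Fin r)) ?_
      (Fin.ne_of_val_ne (show k - 1 - lam ⟨r - 1, by omega⟩ ≠ k + (r - 1) by omega))
    rw [Fin.append_left, Fin.append_right]
    have hlt2 : lam (⟨r - 1, by omega⟩ : Fin r) < k := hlt
    congr 1
    simp only [Fin.val_mk]
    omega
end

section
/- (Main theorem, explicit case n=4, r=2) In the universal decomposition algebra B_{2,4}(c), the action of the generating function ℰ₄(z,w⁻¹) = ∑_{i,j=0}³ Xⁱ(c)⊗∂ʲ(s) zⁱw⁻ʲ on the Schur element Δ_{(2,1)}(H_{2,4}(c)) equals h₂(c)/w + Δ_{(2,1)}(H_{2,4}(c))·z/w + Δ_{(2,2)}(H_{2,4}(c))·z²/w − 1/w³ + Δ_{(1,1)}(H_{2,4}(c))·z²/w³ + Δ_{(2,1)}(H_{2,4}(c))·z³/w³. Equivalently, the coefficient of z²w⁻¹ is h₂(c)², matching the direct computation (X²(c)⊗∂¹(s))⋆Δ_{(2,1)}(H_{2,4}(c)) = h₂(c)². -/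
open PowerSeries Polynomial

set_option synthInstance.maxHeartbeats 1000000
set_option maxHeartbeats 1000000

noncomputable section
/-- the coefficient of zⁱw⁻ʲ in ℰ₄(z,w⁻¹)(Δ_{(2,1)}(H_{2,4}(c))), as an element
of B_{2,4}(c): h₂(c)/w + Δ_{(2,1)}z/w + Δ_{(2,2)}z²/w − 1/w³ + Δ_{(1,1)}z²/w³
+ Δ_{(2,1)}z³/w³. -/
def table (i j : ℕ) : Br 4 2 ⧸ Irn 4 2 :=
  if j = 1 then
    (if i = 0 then Ideal.Quotient.mk (Irn 4 2) (hcc 4 2 2)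
     else if i = 1 then Ideal.Quotient.mk (Irn 4 2) (Dl 4 2 ![2, 1])
     else if i = 2 then Ideal.Quotient.mk (Irn 4 2) (Dl 4 2 ![2, 2]) else 0)
  else if j = 3 then
    (if i = 0 then -1
     else if i = 2 then Ideal.Quotient.mk (Irn 4 2) (Dl 4 2 ![1, 1])
     else if i = 3 then Ideal.Quotient.mk (Irn 4 2) (Dl 4 2 ![2, 1]) else 0)
  else 0
end

namespace Aux
open MvPolynomial

noncomputable section

abbrev B := B0 4
abbrev R2 := Br 4 2

-- c and e abbreviations
lemma cc0 : cc 4 0 = 1 := rfl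
lemma cc1 : cc 4 1 = MvPolynomial.X 0 := rfl
lemma cc2 : cc 4 2 = MvPolynomial.X 1 := rfl
lemma cc3 : cc 4 3 = MvPolynomial.X 2 := rfl
lemma cc4 : cc 4 4 = MvPolynomial.X 3 := rfl

lemma ee0 : ee 4 2 0 = 1 := rfl
lemma ee1 : ee 4 2 1 = MvPolynomial.X 0 := rfl
lemma ee2 : ee 4 2 2 = MvPolynomial.X 1 := rfl
lemma ee3 (k : ℕ) : ee 4 2 (k+3) = 0 := by
  show (if h : k + 2 < 2 then (MvPolynomial.X (⟨k+2, h⟩ : Fin 2) : R2) else 0) = 0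
  rw [dif_neg (by omega)]

-- Eser * Hser = 1
lemma EH : Eser 4 2 * Hser 4 2 = 1 := by
  apply PowerSeries.mul_invOfUnit
  show PowerSeries.constantCoeff (Eser 4 2) = 1
  simp [Eser, ee0]

lemma coeffEH (n : ℕ) :
    ∑ k ∈ Finset.range (n+1), ((-1:R2)^k * ee 4 2 k) * hpl 4 2 (n-k)
      = if n = 0 then 1 else 0 := by
  have := congrArg (PowerSeries.coeff (R := R2) n) EH
  rw [PowerSeries.coeff_mul, Finset.Nat.sum_antidiagonal_eq_sum_range_succ_mk,
    PowerSeries.coeff_one] at this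
  simpa [Eser, hpl] using this

lemma hpl0 : hpl 4 2 0 = 1 := by
  have := coeffEH 0
  simpa [ee0] using this

end
end Aux
namespace Aux
noncomputable section

lemma hpl1 : hpl 4 2 1 = MvPolynomial.X 0 := by
  have := coeffEH 1
  simp [Finset.sum_range_succ, ee0, ee1, hpl0] at this
  linear_combination this

lemma hpl2 : hpl 4 2 2 = MvPolynomial.X 0 ^ 2 - MvPolynomial.X 1 := by
  have := coeffEH 2
  simp [Finset.sum_range_succ, ee0, ee1, ee2, hpl0, hpl1] at this
  linear_combination this

lemma hpl3 : hpl 4 2 3 = MvPolynomial.X 0 ^ 3 - 2 * MvPolynomial.X 0 * MvPolynomial.X 1 := by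
  have := coeffEH 3
  have e3 : ee 4 2 3 = 0 := ee3 0
  simp [Finset.sum_range_succ, ee0, ee1, ee2, e3, hpl0, hpl1, hpl2] at this
  linear_combination this

lemma hpl4 : hpl 4 2 4 = MvPolynomial.X 0 ^ 4 - 3 * MvPolynomial.X 0 ^ 2 * MvPolynomial.X 1
    + MvPolynomial.X 1 ^ 2 := by
  have := coeffEH 4
  have e3 : ee 4 2 3 = 0 := ee3 0
  have e4 : ee 4 2 4 = 0 := ee3 1
  simp [Finset.sum_range_succ, ee0, ee1, ee2, e3, e4, hpl0, hpl1, hpl2, hpl3] at this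
  linear_combination this

end
end Aux
namespace Aux
noncomputable section
open MvPolynomial

lemma hcc_eq (n : ℕ) : hcc 4 2 n
    = ∑ k ∈ Finset.range (n+1), ((-1:R2)^k * MvPolynomial.C (cc 4 k)) * hpl 4 2 (n-k) := by
  rw [hcc, PowerSeries.coeff_mul, Finset.Nat.sum_antidiagonal_eq_sum_range_succ_mk]
  simp [cser, hpl]

lemma cc5 (k : ℕ) : cc 4 (k+5) = 0 := by
  show (if h : k + 4 < 4 then (MvPolynomial.X (⟨k+4, h⟩ : Fin 4) : B) else 0) = 0
  rw [dif_neg (by omega)]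

local notation "c₁" => (MvPolynomial.C (MvPolynomial.X 0 : B) : R2)
local notation "c₂" => (MvPolynomial.C (MvPolynomial.X 1 : B) : R2)
local notation "c₃" => (MvPolynomial.C (MvPolynomial.X 2 : B) : R2)
local notation "c₄" => (MvPolynomial.C (MvPolynomial.X 3 : B) : R2)
local notation "e₁" => (MvPolynomial.X 0 : R2)
local notation "e₂" => (MvPolynomial.X 1 : R2)

lemma hcc1 : hcc 4 2 1 = e₁ - c₁ := by
  rw [hcc_eq]
  simp [Finset.sum_range_succ, cc0, cc1, hpl0, hpl1]
  ring

lemma hcc2 : hcc 4 2 2 = e₁^2 - e₂ - c₁ * e₁ + c₂ := by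
  rw [hcc_eq]
  simp [Finset.sum_range_succ, cc0, cc1, cc2, hpl0, hpl1, hpl2]
  ring

lemma hcc3 : hcc 4 2 3 = e₁^3 - 2*e₁*e₂ - c₃ + c₂*e₁ + c₁*e₂ - c₁*e₁^2 := by
  rw [hcc_eq]
  simp [Finset.sum_range_succ, cc0, cc1, cc2, cc3, hpl0, hpl1, hpl2, hpl3]
  ring

lemma hcc4 : hcc 4 2 4 = e₁^4 - 3*e₁^2*e₂ + e₂^2 + c₄ - c₃*e₁ - c₂*e₂ + c₂*e₁^2
    + 2*c₁*e₁*e₂ - c₁*e₁^3 := by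
  rw [hcc_eq]
  simp [Finset.sum_range_succ, cc0, cc1, cc2, cc3, cc4, hpl0, hpl1, hpl2, hpl3, hpl4]
  ring

end
end Aux
namespace Aux
noncomputable section
open MvPolynomial

/-! ### sc values -/

def cB : PowerSeries B := PowerSeries.mk fun i => (-1) ^ i * cc 4 i

lemma cB_inv : cB * (cB.invOfUnit 1) = 1 := by
  apply PowerSeries.mul_invOfUnit
  show PowerSeries.constantCoeff cB = 1
  simp [cB, cc0]

lemma coeffcB (n : ℕ) :
    ∑ k ∈ Finset.range (n+1), ((-1:B)^k * cc 4 k) * sc 4 (n-k)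
      = if n = 0 then 1 else 0 := by
  have := congrArg (PowerSeries.coeff (R := B) n) cB_inv
  rw [PowerSeries.coeff_mul, Finset.Nat.sum_antidiagonal_eq_sum_range_succ_mk,
    PowerSeries.coeff_one] at this
  simpa [cB, sc] using this

lemma sc0 : sc 4 0 = 1 := by simpa [cc0] using coeffcB 0

lemma sc1 : sc 4 1 = MvPolynomial.X 0 := by
  have := coeffcB 1
  simp [Finset.sum_range_succ, cc0, cc1, sc0] at this
  linear_combination this

lemma sc2 : sc 4 2 = MvPolynomial.X 0 ^ 2 - MvPolynomial.X 1 := by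
  have := coeffcB 2
  simp [Finset.sum_range_succ, cc0, cc1, cc2, sc0, sc1] at this
  linear_combination this

lemma sc3 : sc 4 3 = MvPolynomial.X 0 ^ 3 - 2 * MvPolynomial.X 0 * MvPolynomial.X 1
    + MvPolynomial.X 2 := by
  have := coeffcB 3
  simp [Finset.sum_range_succ, cc0, cc1, cc2, cc3, sc0, sc1, sc2] at this
  linear_combination this

/-! ### ds on monomials -/

lemma ds_monomial (j i : ℕ) :
    ds 4 j (Polynomial.X ^ i) = if j ≤ i then sc 4 (i - j) else 0 := by
  have : (Polynomial.X ^ i : Polynomial B) = Polynomial.basisMonomials B i := by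
    simp [Polynomial.coe_basisMonomials, Polynomial.monomial_one_right_eq_X_pow]
  rw [ds, this, Module.Basis.constr_basis]

/-! ### Xc expansions -/

lemma Xc0 : Xc 4 0 = 1 := by
  simp [Xc, cc0]

lemma Xc1 : Xc 4 1 = Polynomial.X - Polynomial.C (MvPolynomial.X 0) := by
  rw [Xc]
  simp [Finset.sum_range_succ, cc0, cc1]
  ring

lemma Xc2 : Xc 4 2 = Polynomial.X ^ 2 - Polynomial.C (MvPolynomial.X 0) * Polynomial.X
    + Polynomial.C (MvPolynomial.X 1) := by
  rw [Xc]
  simp [Finset.sum_range_succ, cc0, cc1, cc2]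
  ring

lemma Xc3 : Xc 4 3 = Polynomial.X ^ 3 - Polynomial.C (MvPolynomial.X 0) * Polynomial.X ^ 2
    + Polynomial.C (MvPolynomial.X 1) * Polynomial.X - Polynomial.C (MvPolynomial.X 2) := by
  rw [Xc]
  simp [Finset.sum_range_succ, cc0, cc1, cc2, cc3]
  ring

end
end Aux
namespace Aux
noncomputable section
open MvPolynomial

lemma Xc1_smul : Xc 4 1 = Polynomial.X ^ 1 - (MvPolynomial.X 0 : B) • Polynomial.X ^ 0 := by
  simp only [Polynomial.smul_eq_C_mul]; rw [Xc1]; ring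

lemma Xc3_smul : Xc 4 3 = Polynomial.X ^ 3 - (MvPolynomial.X 0 : B) • Polynomial.X ^ 2
    + (MvPolynomial.X 1 : B) • Polynomial.X ^ 1 - (MvPolynomial.X 2 : B) • Polynomial.X ^ 0 := by
  simp only [Polynomial.smul_eq_C_mul]; rw [Xc3]; ring

lemma dsXc1 (j : ℕ) : ds 4 j (Xc 4 1) = if j = 1 then 1 else 0 := by
  rw [Xc1_smul, map_sub, map_smul, ds_monomial, ds_monomial]
  rcases j with _|_|j
  · simp [sc0, sc1, smul_eq_mul]
  · simp [sc0, sc1, smul_eq_mul]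
  · simp only [show ¬(j+2 ≤ 1) by omega, show ¬(j+2 ≤ 0) by omega, if_neg, if_false]
    simp

lemma dsXc3 (j : ℕ) : ds 4 j (Xc 4 3) = if j = 3 then 1 else 0 := by
  rw [Xc3_smul, map_sub, map_add, map_sub, map_smul, map_smul, map_smul,
    ds_monomial, ds_monomial, ds_monomial, ds_monomial]
  rcases j with _|_|_|_|j
  · simp [sc0, sc1, sc2, sc3, smul_eq_mul]; ring
  · simp [sc0, sc1, sc2, smul_eq_mul]; ring
  · simp [sc0, sc1, smul_eq_mul]
  · simp [sc0, smul_eq_mul]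
  · simp only [show ¬(j+4 ≤ 3) by omega, show ¬(j+4 ≤ 2) by omega,
      show ¬(j+4 ≤ 1) by omega, show ¬(j+4 ≤ 0) by omega, if_neg, if_false]
    simp

end
end Aux
namespace Aux
noncomputable section
open MvPolynomial

/-! ### The functional Φ : ExtA 4 →ₗ[B] R2 -/

def evx (t : R2) : Polynomial B →ₗ[B] R2 := (Polynomial.aeval t).toLinearMap

def Lm : Polynomial B →ₗ[B] (Fin 2 → R2) :=
  LinearMap.pi ![evx (MvPolynomial.X 0), evx (MvPolynomial.X 1)]

def detB : AlternatingMap B (Fin 2 → R2) R2 (Fin 2) :=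
  { (Matrix.detRowAlternating : AlternatingMap R2 (Fin 2 → R2) R2 (Fin 2)
      ).toMultilinearMap.restrictScalars B with
    map_eq_zero_of_eq' := fun v i j h hij =>
      (Matrix.detRowAlternating : AlternatingMap R2 (Fin 2 → R2) R2 (Fin 2)
        ).map_eq_zero_of_eq v h hij }

def f2 : AlternatingMap B (Polynomial B) R2 (Fin 2) := detB.compLinearMap Lm

def Phi : ExtA 4 →ₗ[B] R2 :=
  ExteriorAlgebra.liftAlternating (fun i => match i with | 2 => f2 | _ => 0)

/-- the model pairing -/
def A2 (p q : Polynomial B) : R2 :=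
  Polynomial.aeval (MvPolynomial.X 0 : R2) p * Polynomial.aeval (MvPolynomial.X 1 : R2) q
    - Polynomial.aeval (MvPolynomial.X 1 : R2) p * Polynomial.aeval (MvPolynomial.X 0 : R2) q

lemma Phi_ιMulti (v : Fin 2 → Polynomial B) :
    Phi (ExteriorAlgebra.ιMulti B 2 v) = A2 (v 0) (v 1) := by
  rw [Phi, ExteriorAlgebra.liftAlternating_apply_ιMulti]
  show detB (fun i => Lm (v i)) = _
  show Matrix.det (Matrix.of fun i j => Lm (v i) j) = _
  rw [Matrix.det_fin_two]
  simp [Lm, evx, A2, Matrix.of_apply]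

lemma Phi_wedge (v : Fin 2 → Polynomial B) : Phi (wedge 4 2 v) = A2 (v 0) (v 1) :=
  Phi_ιMulti v

lemma ιMulti_two (p q : Polynomial B) :
    ExteriorAlgebra.ιMulti B 2 ![p, q]
      = ExteriorAlgebra.ι B p * ExteriorAlgebra.ι B q := by
  rw [ExteriorAlgebra.ιMulti_apply]
  simp

lemma Phi_mul (p q : Polynomial B) :
    Phi (ExteriorAlgebra.ι B p * ExteriorAlgebra.ι B q) = A2 p q := by
  rw [← ιMulti_two]
  simpa using Phi_ιMulti ![p, q]

end
end Aux
namespace Aux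
noncomputable section
open MvPolynomial

lemma wedge_eq (p q : Polynomial B) :
    wedge 4 2 ![p, q] = ExteriorAlgebra.ι B p * ExteriorAlgebra.ι B q := by
  rw [wedge, ιMulti_two]

lemma contract_pair (d : Module.Dual B (Polynomial B)) (p q : Polynomial B) :
    CliffordAlgebra.contractLeft (Q := (0 : QuadraticForm B (Polynomial B))) d
        (ExteriorAlgebra.ι B p * ExteriorAlgebra.ι B q)
      = d p • ExteriorAlgebra.ι B q - d q • ExteriorAlgebra.ι B p := by
  rw [show (ExteriorAlgebra.ι B p : ExtA 4)
      = CliffordAlgebra.ι (0 : QuadraticForm B (Polynomial B)) p from rfl,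
    show (ExteriorAlgebra.ι B q : ExtA 4)
      = CliffordAlgebra.ι (0 : QuadraticForm B (Polynomial B)) q from rfl,
    CliffordAlgebra.contractLeft_ι_mul, CliffordAlgebra.contractLeft_ι]
  simp [Algebra.smul_def, Algebra.commutes]

lemma Phi_RHS (i j : ℕ) :
    Phi (ExteriorAlgebra.ι (B0 4) (Xc 4 i) *
        CliffordAlgebra.contractLeft
          (Q := (0 : QuadraticForm (B0 4) (Polynomial (B0 4))))
          (ds 4 j) (wedge 4 2 ![Xc 4 3, Xc 4 1]))
      = (if j = 1 then 1 else 0 : B) • A2 (Xc 4 3) (Xc 4 i)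
        + (if j = 3 then 1 else 0 : B) • A2 (Xc 4 i) (Xc 4 1) := by
  rw [wedge_eq, contract_pair, dsXc1, dsXc3, mul_sub, mul_smul_comm, mul_smul_comm,
    map_sub, map_smul, map_smul, Phi_mul, Phi_mul]
  have hswap : A2 (Xc 4 i) (Xc 4 3) = - A2 (Xc 4 3) (Xc 4 i) := by unfold A2; ring
  rw [hswap, smul_neg, sub_neg_eq_add, add_comm]

end
end Aux
namespace Aux
noncomputable section
open MvPolynomial

def sig : R2 →ₐ[B] R2 :=
  MvPolynomial.aeval (fun i : Fin 2 => MvPolynomial.esymm (Fin 2) B ((i : ℕ) + 1))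

lemma sig_injective : Function.Injective sig := by
  have h := MvPolynomial.esymmAlgHom_injective (σ := Fin 2) (n := 2) B
    (by simp)
  intro a b hab
  apply h
  apply Subtype.ext
  rw [MvPolynomial.esymmAlgHom_apply, MvPolynomial.esymmAlgHom_apply]
  exact hab

lemma esymm1 : MvPolynomial.esymm (Fin 2) B 1 = MvPolynomial.X 0 + MvPolynomial.X 1 := by
  rw [MvPolynomial.esymm_one, Fin.sum_univ_two]

lemma esymm2 : MvPolynomial.esymm (Fin 2) B 2 = MvPolynomial.X 0 * MvPolynomial.X 1 := by
  rw [MvPolynomial.esymm,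
    show Finset.powersetCard 2 (Finset.univ : Finset (Fin 2)) = {Finset.univ} from by decide]
  rw [Finset.sum_singleton, Fin.prod_univ_two]

lemma sig_X0 : sig (MvPolynomial.X 0) = MvPolynomial.X 0 + MvPolynomial.X 1 := by
  rw [sig, MvPolynomial.aeval_X]; exact esymm1

lemma sig_X1 : sig (MvPolynomial.X 1) = MvPolynomial.X 0 * MvPolynomial.X 1 := by
  rw [sig, MvPolynomial.aeval_X]; exact esymm2

lemma sig_C (a : B) : sig (MvPolynomial.C a) = MvPolynomial.C a := by
  rw [sig, MvPolynomial.aeval_C]; rfl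

lemma delta_ne : (MvPolynomial.X 0 - MvPolynomial.X 1 : R2) ≠ 0 := by
  intro h
  have := congrArg (MvPolynomial.eval ![(1 : B), 0]) h
  simp at this

lemma hcc0 : hcc 4 2 0 = 1 := by
  rw [hcc_eq]; simp [cc0, hpl0]

lemma D21 : Dl 4 2 ![2, 1] = hcc 4 2 2 * hcc 4 2 1 - hcc 4 2 3 := by
  rw [Dl, Matrix.det_fin_two]
  norm_num [hccZ, hcc0]
  rfl

lemma D22 : Dl 4 2 ![2, 2] = hcc 4 2 2 * hcc 4 2 2 - hcc 4 2 1 * hcc 4 2 3 := by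
  rw [Dl, Matrix.det_fin_two]
  norm_num [hccZ]
  rfl

lemma D11 : Dl 4 2 ![1, 1] = hcc 4 2 1 * hcc 4 2 1 - hcc 4 2 2 := by
  rw [Dl, Matrix.det_fin_two]
  norm_num [hccZ, hcc0]
  rfl

end
end Aux
namespace Aux
noncomputable section
open MvPolynomial

def MW : Submodule B (ExtA 4) := Submodule.span B (Set.range (wedge 4 2))

lemma wedge_mem (g : Fin 2 → Polynomial B) : wedge 4 2 g ∈ MW :=
  Submodule.subset_span ⟨g, rfl⟩

lemma act_X_wedge (act : Br 4 2 →ₐ[B0 4] Module.End (B0 4) (ExtA 4))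
    (hact : ActSpec 4 2 act) (i : Fin 2) (g : Fin 2 → Polynomial B) :
    act (MvPolynomial.X i) (wedge 4 2 g) ∈ MW ∧
      Phi (act (MvPolynomial.X i) (wedge 4 2 g))
        = MvPolynomial.esymm (Fin 2) B ((i : ℕ) + 1) * Phi (wedge 4 2 g) := by
  rw [hact i g]
  fin_cases i
  · rw [show Finset.powersetCard (0 + 1) (Finset.univ : Finset (Fin 2))
        = {{0}, {1}} from by decide]
    rw [Finset.sum_insert (by decide), Finset.sum_singleton]
    constructor
    · exact Submodule.add_mem _ (wedge_mem _) (wedge_mem _)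
    · rw [map_add, Phi_wedge, Phi_wedge, Phi_wedge, esymm1]
      simp only [show ((0 : Fin 2) ∈ ({0} : Finset (Fin 2))) from by decide,
        show ¬((1 : Fin 2) ∈ ({0} : Finset (Fin 2))) from by decide,
        show ¬((0 : Fin 2) ∈ ({1} : Finset (Fin 2))) from by decide,
        show ((1 : Fin 2) ∈ ({1} : Finset (Fin 2))) from by decide,
        if_pos, if_neg, if_true, if_false]
      unfold A2
      simp only [map_mul, Polynomial.aeval_X]
      ring
  · rw [show Finset.powersetCard (1 + 1) (Finset.univ : Finset (Fin 2))
        = {Finset.univ} from by decide]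
    rw [Finset.sum_singleton]
    constructor
    · exact wedge_mem _
    · rw [Phi_wedge, Phi_wedge, esymm2]
      simp only [Finset.mem_univ, if_true]
      unfold A2
      simp only [map_mul, Polynomial.aeval_X]
      ring

lemma act_X_mem (act : Br 4 2 →ₐ[B0 4] Module.End (B0 4) (ExtA 4))
    (hact : ActSpec 4 2 act) (i : Fin 2) (m : ExtA 4) (hm : m ∈ MW) :
    act (MvPolynomial.X i) m ∈ MW ∧
      Phi (act (MvPolynomial.X i) m)
        = MvPolynomial.esymm (Fin 2) B ((i : ℕ) + 1) * Phi m := by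
  induction hm using Submodule.span_induction with
  | mem x hx =>
      obtain ⟨g, rfl⟩ := hx
      exact act_X_wedge act hact i g
  | zero => simp
  | add x y hx hy ihx ihy =>
      refine ⟨by rw [map_add]; exact Submodule.add_mem _ ihx.1 ihy.1, ?_⟩
      rw [map_add, map_add, map_add, ihx.2, ihy.2, mul_add]
  | smul b x hx ih =>
      refine ⟨by rw [map_smul]; exact Submodule.smul_mem _ b ih.1, ?_⟩
      rw [map_smul, map_smul, ih.2, map_smul, Algebra.mul_smul_comm]

lemma act_main (act : Br 4 2 →ₐ[B0 4] Module.End (B0 4) (ExtA 4))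
    (hact : ActSpec 4 2 act) (u : Br 4 2) :
    ∀ m ∈ MW, act u m ∈ MW ∧ Phi (act u m) = sig u * Phi m := by
  induction u using MvPolynomial.induction_on with
  | C a =>
      intro m hm
      have h1 : act (MvPolynomial.C a) m = a • m := by
        rw [show (MvPolynomial.C a : Br 4 2) = algebraMap B (Br 4 2) a from rfl,
          act.commutes, Module.algebraMap_end_apply]
      rw [h1, sig_C]
      exact ⟨Submodule.smul_mem _ a hm,
        by rw [map_smul, MvPolynomial.smul_eq_C_mul]⟩
  | add p q ihp ihq =>
      intro m hm
      rw [map_add, LinearMap.add_apply, map_add, map_add]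
      exact ⟨Submodule.add_mem _ ((ihp m hm).1) ((ihq m hm).1),
        by rw [(ihp m hm).2, (ihq m hm).2, add_mul]⟩
  | mul_X p i ih =>
      intro m hm
      have h1 : act (p * MvPolynomial.X i) m = act p (act (MvPolynomial.X i) m) := by
        rw [map_mul, Module.End.mul_apply]
      obtain ⟨hmem, heq⟩ := act_X_mem act hact i m hm
      obtain ⟨hmem2, heq2⟩ := ih (act (MvPolynomial.X i) m) hmem
      rw [h1]
      refine ⟨hmem2, ?_⟩
      rw [heq2, heq, map_mul, sig]
      rw [MvPolynomial.aeval_X]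
      ring

end
end Aux
namespace Aux
noncomputable section
open MvPolynomial

lemma Phi_omega : Phi (wedge 4 2 ![Xc 4 1, Xc 4 0]) = MvPolynomial.X 0 - MvPolynomial.X 1 := by
  rw [Phi_wedge]
  show A2 (Xc 4 1) (Xc 4 0) = _
  unfold A2
  rw [Aux.Xc1, Aux.Xc0]
  simp

lemma resolve (u u₀ : Br 4 2) (v : R2)
    (hkey : sig u * (MvPolynomial.X 0 - MvPolynomial.X 1) = v)
    (h0 : sig u₀ * (MvPolynomial.X 0 - MvPolynomial.X 1) = v) : u = u₀ :=
  sig_injective (mul_right_cancel₀ delta_ne (hkey.trans h0.symm))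

end
end Aux

theorem stmt19_aux (act : Br 4 2 →ₐ[B0 4] Module.End (B0 4) (ExtA 4))
    (hact : ActSpec 4 2 act) :
    ∀ i j : ℕ, i ≤ 3 → j ≤ 3 → ∀ u : Br 4 2,
      act u (wedge 4 2 ![Xc 4 1, Xc 4 0]) =
        ExteriorAlgebra.ι (B0 4) (Xc 4 i) *
          CliffordAlgebra.contractLeft
            (Q := (0 : QuadraticForm (B0 4) (Polynomial (B0 4))))
            (ds 4 j) (wedge 4 2 ![Xc 4 3, Xc 4 1]) →
      Ideal.Quotient.mk (Irn 4 2) u = table i j := by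
  intro i j hi hj u hu
  have hkey : Aux.sig u * (MvPolynomial.X 0 - MvPolynomial.X 1) =
      (if j = 1 then 1 else 0 : Aux.B) • Aux.A2 (Xc 4 3) (Xc 4 i)
        + (if j = 3 then 1 else 0 : Aux.B) • Aux.A2 (Xc 4 i) (Xc 4 1) := by
    rw [← Aux.Phi_RHS i j, ← hu,
      (Aux.act_main act hact u _ (Aux.wedge_mem _)).2, Aux.Phi_omega]
  clear hu
  interval_cases j
  · -- j = 0 : RHS = 0
    simp only [if_neg (by norm_num : ¬(0:ℕ) = 1), if_neg (by norm_num : ¬(0:ℕ) = 3),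
      zero_smul, add_zero] at hkey
    have hu0 : u = 0 := Aux.resolve u 0 0 hkey (by rw [map_zero, zero_mul])
    rw [hu0, map_zero, table]
    norm_num
  · -- j = 1
    norm_num at hkey
    interval_cases i
    · have h0 : Aux.sig (hcc 4 2 2) * (MvPolynomial.X 0 - MvPolynomial.X 1)
          = Aux.A2 (Xc 4 3) (Xc 4 0) := by
        rw [Aux.hcc2]
        unfold Aux.A2
        rw [Aux.Xc3, Aux.Xc0]
        simp only [map_sub, map_add, map_mul, map_pow, map_one, map_neg, map_ofNat,
          Aux.sig_X0, Aux.sig_X1, Aux.sig_C, Polynomial.aeval_X, Polynomial.aeval_C,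
          MvPolynomial.algebraMap_eq]
        ring
      rw [Aux.resolve u _ _ hkey h0, table]
      norm_num
    · have h0 : Aux.sig (Dl 4 2 ![2, 1]) * (MvPolynomial.X 0 - MvPolynomial.X 1)
          = Aux.A2 (Xc 4 3) (Xc 4 1) := by
        rw [Aux.D21, Aux.hcc2, Aux.hcc1, Aux.hcc3]
        unfold Aux.A2
        rw [Aux.Xc3, Aux.Xc1]
        simp only [map_sub, map_add, map_mul, map_pow, map_one, map_neg, map_ofNat,
          Aux.sig_X0, Aux.sig_X1, Aux.sig_C, Polynomial.aeval_X, Polynomial.aeval_C,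
          MvPolynomial.algebraMap_eq]
        ring
      rw [Aux.resolve u _ _ hkey h0, table]
      norm_num
    · have h0 : Aux.sig (Dl 4 2 ![2, 2]) * (MvPolynomial.X 0 - MvPolynomial.X 1)
          = Aux.A2 (Xc 4 3) (Xc 4 2) := by
        rw [Aux.D22, Aux.hcc2, Aux.hcc1, Aux.hcc3]
        unfold Aux.A2
        rw [Aux.Xc3, Aux.Xc2]
        simp only [map_sub, map_add, map_mul, map_pow, map_one, map_neg, map_ofNat,
          Aux.sig_X0, Aux.sig_X1, Aux.sig_C, Polynomial.aeval_X, Polynomial.aeval_C,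
          MvPolynomial.algebraMap_eq]
        ring
      rw [Aux.resolve u _ _ hkey h0, table]
      norm_num
    · have h0 : Aux.sig 0 * (MvPolynomial.X 0 - MvPolynomial.X 1)
          = Aux.A2 (Xc 4 3) (Xc 4 3) := by
        rw [map_zero, zero_mul]
        unfold Aux.A2
        ring
      rw [Aux.resolve u _ _ hkey h0, map_zero, table]
      norm_num
  · -- j = 2
    simp only [if_neg (by norm_num : ¬(2:ℕ) = 1), if_neg (by norm_num : ¬(2:ℕ) = 3),
      zero_smul, add_zero] at hkey
    have hu0 : u = 0 := Aux.resolve u 0 0 hkey (by rw [map_zero, zero_mul])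
    rw [hu0, map_zero, table]
    norm_num
  · -- j = 3
    norm_num at hkey
    interval_cases i
    · have h0 : Aux.sig (-1) * (MvPolynomial.X 0 - MvPolynomial.X 1)
          = Aux.A2 (Xc 4 0) (Xc 4 1) := by
        rw [map_neg, map_one]
        unfold Aux.A2
        rw [Aux.Xc1, Aux.Xc0]
        simp only [map_sub, map_add, map_mul, map_pow, map_one,
          Polynomial.aeval_X, Polynomial.aeval_C, MvPolynomial.algebraMap_eq]
        ring
      rw [Aux.resolve u _ _ hkey h0, map_neg, map_one, table]
      norm_num
    · have h0 : Aux.sig 0 * (MvPolynomial.X 0 - MvPolynomial.X 1)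
          = Aux.A2 (Xc 4 1) (Xc 4 1) := by
        rw [map_zero, zero_mul]
        unfold Aux.A2
        ring
      rw [Aux.resolve u _ _ hkey h0, map_zero, table]
      norm_num
    · have h0 : Aux.sig (Dl 4 2 ![1, 1]) * (MvPolynomial.X 0 - MvPolynomial.X 1)
          = Aux.A2 (Xc 4 2) (Xc 4 1) := by
        rw [Aux.D11, Aux.hcc1, Aux.hcc2]
        unfold Aux.A2
        rw [Aux.Xc2, Aux.Xc1]
        simp only [map_sub, map_add, map_mul, map_pow, map_one, map_neg, map_ofNat,
          Aux.sig_X0, Aux.sig_X1, Aux.sig_C, Polynomial.aeval_X, Polynomial.aeval_C,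
          MvPolynomial.algebraMap_eq]
        ring
      rw [Aux.resolve u _ _ hkey h0, table]
      norm_num
    · have h0 : Aux.sig (Dl 4 2 ![2, 1]) * (MvPolynomial.X 0 - MvPolynomial.X 1)
          = Aux.A2 (Xc 4 3) (Xc 4 1) := by
        rw [Aux.D21, Aux.hcc2, Aux.hcc1, Aux.hcc3]
        unfold Aux.A2
        rw [Aux.Xc3, Aux.Xc1]
        simp only [map_sub, map_add, map_mul, map_pow, map_one, map_neg, map_ofNat,
          Aux.sig_X0, Aux.sig_X1, Aux.sig_C, Polynomial.aeval_X, Polynomial.aeval_C,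
          MvPolynomial.algebraMap_eq]
        ring
      rw [Aux.resolve u _ _ hkey h0, table]
      norm_num
/-- the explicit case n = 4, r = 2: the coefficient of zⁱw⁻ʲ of
ℰ₄(z,w⁻¹)(Δ_{(2,1)}(H_{2,4}(c))), computed as the element u of B₂(c) with
u·[X(c)]²₀ = Xⁱ(c) ∧ (∂ʲ(s) ⌟ (X³(c)∧X¹(c))), projects in B_{2,4}(c) to the
stated table; e.g. the coefficient of z²w⁻¹ is Δ_{(2,2)} = h₂(c)². -/
theorem stmt19 (act : Br 4 2 →ₐ[B0 4] Module.End (B0 4) (ExtA 4))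
    (hact : ActSpec 4 2 act) :
    ∀ i j : ℕ, i ≤ 3 → j ≤ 3 → ∀ u : Br 4 2,
      act u (wedge 4 2 ![Xc 4 1, Xc 4 0]) =
        ExteriorAlgebra.ι (B0 4) (Xc 4 i) *
          CliffordAlgebra.contractLeft
            (Q := (0 : QuadraticForm (B0 4) (Polynomial (B0 4))))
            (ds 4 j) (wedge 4 2 ![Xc 4 3, Xc 4 1]) →
      Ideal.Quotient.mk (Irn 4 2) u = table i j := stmt19_aux act hact
end
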